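/- Let d ≥ 2, let ψ be a unit vector in ℂ^d, and let t ∈ [1, d]. For every Hermitian positive semidefinite operator Ω on ℂ^d with Ωψ = ψ and tr(Ω) = t, the supremum q(Ω) of ⟨φ, Ωφ⟩ over unit vectors φ orthogonal to ψ satisfies q(Ω) ≥ (t−1)/(d−1); and the operator Ω* = |ψ⟩⟨ψ| + ((t−1)/(d−1))·(I − |ψ⟩⟨ψ|) satisfies Ω*ψ = ψ, tr(Ω*) = t, and q(Ω*) = (t−1)/(d−1). In particular, with d = 2^N and t = 2^{N−1} (the trace of any convex combination of positive-eigenspace projectors of N-qubit stabilizers), the optimal value is (2^{N−1} − 1)/(2^N − 1). -/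

import Mathlib

open Matrix ComplexOrder

/-- The performance parameter `q(Ω, ψ)`: the supremum of `⟨φ, Ωφ⟩` over unit
vectors `φ` orthogonal to `ψ`. -/
noncomputable def qparam {n : Type*} [Fintype n] [DecidableEq n]
    (Ω : Matrix n n ℂ) (ψ : n → ℂ) : ℝ :=
  sSup {x : ℝ | ∃ φ : n → ℂ, star φ ⬝ᵥ φ = 1 ∧ star ψ ⬝ᵥ φ = 0 ∧
    x = (star φ ⬝ᵥ (Ω *ᵥ φ)).re}

/-- The benchmark strategy `Ω* = |ψ⟩⟨ψ| + ((t−1)/(d−1))·(I − |ψ⟩⟨ψ|)`. -/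
noncomputable def Ωstar (d : ℕ) (ψ : Fin d → ℂ) (t : ℝ) : Matrix (Fin d) (Fin d) ℂ :=
  vecMulVec ψ (star ψ)
    + (((t - 1) / (d - 1) : ℝ) : ℂ) •
        ((1 : Matrix (Fin d) (Fin d) ℂ) - vecMulVec ψ (star ψ))

lemma vecMulVec_mulVec' {d : ℕ} (a b x : Fin d → ℂ) :
    vecMulVec a b *ᵥ x = (b ⬝ᵥ x) • a := by
  funext k
  simp [Matrix.mulVec, Matrix.vecMulVec_apply, dotProduct, Finset.mul_sum, mul_assoc,
    mul_comm, mul_left_comm]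

/-- Existence of an orthonormal family (w.r.t. dot product) extending a unit vector. -/
lemma exists_onb {d : ℕ} (hd : 0 < d) (ψ : Fin d → ℂ) (hψ : star ψ ⬝ᵥ ψ = 1) :
    ∃ c : Fin d → Fin d → ℂ,
      (∀ i j, star (c i) ⬝ᵥ c j = if i = j then 1 else 0) ∧ c ⟨0, hd⟩ = ψ := by
  set i₀ : Fin d := ⟨0, hd⟩
  let ψ' : EuclideanSpace ℂ (Fin d) := (WithLp.equiv 2 _).symm ψ
  have hcard : Module.finrank ℂ (EuclideanSpace ℂ (Fin d)) = Fintype.card (Fin d) := by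
    simp [finrank_euclideanSpace]
  have horth : Orthonormal ℂ (({i₀} : Set (Fin d)).restrict (fun _ => ψ')) := by
    rw [orthonormal_iff_ite]
    intro i j
    have : i = j := Subtype.ext (by
      have h1 := i.2; have h2 := j.2
      simp only [Set.mem_singleton_iff] at h1 h2
      rw [h1, h2])
    subst this
    rw [if_pos rfl, EuclideanSpace.inner_eq_star_dotProduct, dotProduct_comm]
    exact hψ
  obtain ⟨b, hb⟩ := horth.exists_orthonormalBasis_extension_of_card_eq hcard
  refine ⟨fun i => WithLp.equiv 2 _ (b i), fun i j => ?_, ?_⟩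
  · have := orthonormal_iff_ite.mp b.orthonormal i j
    rwa [EuclideanSpace.inner_eq_star_dotProduct, dotProduct_comm] at this
  · have := hb i₀ rfl
    simp only [this]
    rfl

lemma trace_eq_sum_quad {d : ℕ} (Ω : Matrix (Fin d) (Fin d) ℂ) (c : Fin d → Fin d → ℂ)
    (hc : ∀ i j, star (c i) ⬝ᵥ c j = if i = j then 1 else 0) :
    Ω.trace = ∑ i, star (c i) ⬝ᵥ (Ω *ᵥ c i) := by
  set B : Matrix (Fin d) (Fin d) ℂ := Matrix.of fun k i => c i k with hB
  have h1 : Bᴴ * B = 1 := by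
    ext i j
    have := hc i j
    simpa [Matrix.mul_apply, Matrix.conjTranspose_apply, dotProduct, Matrix.one_apply, hB]
      using this
  have h2 : B * Bᴴ = 1 := mul_eq_one_comm.mp h1
  calc Ω.trace = (Ω * (B * Bᴴ)).trace := by rw [h2, mul_one]
    _ = (Bᴴ * (Ω * B)).trace := by
        rw [← Matrix.mul_assoc, Matrix.trace_mul_comm]
    _ = ∑ i, star (c i) ⬝ᵥ (Ω *ᵥ c i) := by
        simp only [Matrix.trace, Matrix.diag, Matrix.mul_apply, Matrix.conjTranspose_apply,
          dotProduct, Matrix.mulVec, hB, Matrix.of_apply, Finset.mul_sum, Finset.sum_mul,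
          Pi.star_apply]

lemma quad_re_nonneg {d : ℕ} {Ω : Matrix (Fin d) (Fin d) ℂ} (hΩ : Ω.PosSemidef)
    (x : Fin d → ℂ) : 0 ≤ (star x ⬝ᵥ (Ω *ᵥ x)).re := by
  have := hΩ.dotProduct_mulVec_nonneg x
  rw [Complex.le_def] at this
  simpa using this.1

lemma quad_le_trace {d : ℕ} (hd : 0 < d) {Ω : Matrix (Fin d) (Fin d) ℂ} (hΩ : Ω.PosSemidef)
    (φ : Fin d → ℂ) (hφ : star φ ⬝ᵥ φ = 1) :
    (star φ ⬝ᵥ (Ω *ᵥ φ)).re ≤ Ω.trace.re := by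
  obtain ⟨c, hc, hc0⟩ := exists_onb hd φ hφ
  rw [trace_eq_sum_quad Ω c hc, Complex.re_sum]
  have := Finset.single_le_sum (f := fun i => (star (c i) ⬝ᵥ (Ω *ᵥ c i)).re)
    (fun i _ => quad_re_nonneg hΩ (c i)) (Finset.mem_univ (⟨0, hd⟩ : Fin d))
  simpa [hc0] using this

theorem stmt_16 (d : ℕ) (hd : 2 ≤ d) (ψ : Fin d → ℂ) (hψ : star ψ ⬝ᵥ ψ = 1)
    (t : ℝ) (ht : t ∈ Set.Icc (1 : ℝ) (d : ℝ)) :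
    (∀ Ω : Matrix (Fin d) (Fin d) ℂ, Ω.PosSemidef → Ω *ᵥ ψ = ψ → Ω.trace = (t : ℂ) →
      (t - 1) / (d - 1) ≤ qparam Ω ψ) ∧
    Ωstar d ψ t *ᵥ ψ = ψ ∧
    (Ωstar d ψ t).trace = (t : ℂ) ∧
    qparam (Ωstar d ψ t) ψ = (t - 1) / (d - 1) ∧
    ∀ N : ℕ, 1 ≤ N → d = 2 ^ N → t = 2 ^ (N - 1) →
      qparam (Ωstar d ψ t) ψ = ((2 : ℝ) ^ (N - 1) - 1) / ((2 : ℝ) ^ N - 1) := by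
  have hd0 : 0 < d := by omega
  have hd1R : (0:ℝ) < (d:ℝ) - 1 := by
    have : (2:ℝ) ≤ d := by exact_mod_cast hd
    linarith
  set c₀ : ℝ := (t - 1) / ((d:ℝ) - 1) with hc₀
  set i₀ : Fin d := ⟨0, hd0⟩
  -- the benchmark computation: for unit φ ⊥ ψ, the quadratic form of Ωstar is c₀
  have hmulψ : vecMulVec ψ (star ψ) *ᵥ ψ = ψ := by
    rw [vecMulVec_mulVec', hψ, one_smul]
  have hstar_mv : ∀ φ : Fin d → ℂ, star ψ ⬝ᵥ φ = 0 →
      Ωstar d ψ t *ᵥ φ = ((c₀ : ℂ)) • φ := by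
    intro φ hortho
    simp only [Ωstar, Matrix.add_mulVec, Matrix.smul_mulVec, Matrix.sub_mulVec,
      Matrix.one_mulVec, vecMulVec_mulVec', hortho, zero_smul, sub_zero, zero_add, hc₀]
  have hpart2 : Ωstar d ψ t *ᵥ ψ = ψ := by
    simp only [Ωstar, Matrix.add_mulVec, Matrix.smul_mulVec, Matrix.sub_mulVec,
      Matrix.one_mulVec, hmulψ, sub_self, smul_zero, add_zero]
  have hpart3 : (Ωstar d ψ t).trace = (t : ℂ) := by
    have htr1 : (vecMulVec ψ (star ψ)).trace = 1 := by
      simp only [Matrix.trace, Matrix.diag, Matrix.vecMulVec_apply]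
      rw [← hψ]
      simp [dotProduct, mul_comm]
    have hdc : ((d:ℂ) - 1) = (((d:ℝ) - 1 : ℝ) : ℂ) := by push_cast; ring
    simp only [Ωstar, Matrix.trace_add, Matrix.trace_smul, Matrix.trace_sub, Matrix.trace_one,
      htr1, Fintype.card_fin]
    rw [smul_eq_mul, hdc, ← Complex.ofReal_mul, div_mul_cancel₀ _ (ne_of_gt hd1R)]
    push_cast; ring
  -- the set for Ωstar is the singleton {c₀}
  have hset : {x : ℝ | ∃ φ : Fin d → ℂ, star φ ⬝ᵥ φ = 1 ∧ star ψ ⬝ᵥ φ = 0 ∧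
      x = (star φ ⬝ᵥ (Ωstar d ψ t *ᵥ φ)).re} = {c₀} := by
    ext x
    simp only [Set.mem_setOf_eq, Set.mem_singleton_iff]
    constructor
    · rintro ⟨φ, hφ1, hφ2, rfl⟩
      rw [hstar_mv φ hφ2, dotProduct_smul, hφ1]
      simp
    · rintro rfl
      obtain ⟨c, hc, hc0⟩ := exists_onb hd0 ψ hψ
      have hne : i₀ ≠ (⟨1, hd⟩ : Fin d) := by
        intro h; exact absurd (congrArg Fin.val h) (by simp [i₀])
      refine ⟨c ⟨1, hd⟩, by simpa using hc ⟨1, hd⟩ ⟨1, hd⟩, ?_, ?_⟩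
      · rw [← hc0]
        simpa [hne] using hc i₀ ⟨1, hd⟩
      · rw [hstar_mv _ (by rw [← hc0]; simpa [hne] using hc i₀ ⟨1, hd⟩),
          dotProduct_smul]
        simp [show star (c ⟨1, hd⟩) ⬝ᵥ c ⟨1, hd⟩ = 1 by simpa using hc ⟨1, hd⟩ ⟨1, hd⟩]
  have hpart4 : qparam (Ωstar d ψ t) ψ = c₀ := by
    rw [qparam, hset, csSup_singleton]
  refine ⟨?_, hpart2, hpart3, hpart4, ?_⟩
  · -- part 1
    intro Ω hPSD hfix htr
    obtain ⟨c, hc, hc0⟩ := exists_onb hd0 ψ hψ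
    have htrre : Ω.trace.re = t := by rw [htr]; simp
    have hbdd : BddAbove {x : ℝ | ∃ φ : Fin d → ℂ, star φ ⬝ᵥ φ = 1 ∧ star ψ ⬝ᵥ φ = 0 ∧
        x = (star φ ⬝ᵥ (Ω *ᵥ φ)).re} := by
      refine ⟨t, ?_⟩
      rintro x ⟨φ, hφ1, _, rfl⟩
      rw [← htrre]
      exact quad_le_trace hd0 hPSD φ hφ1
    -- trace decomposition
    have hsum : ∑ i, (star (c i) ⬝ᵥ (Ω *ᵥ c i)).re = t := by
      rw [← Complex.re_sum, ← trace_eq_sum_quad Ω c hc, htrre]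
    have hterm0 : (star (c i₀) ⬝ᵥ (Ω *ᵥ c i₀)).re = 1 := by
      rw [hc0, hfix, hψ]; simp
    have hrest : ∑ i ∈ Finset.univ.erase i₀, (star (c i) ⬝ᵥ (Ω *ᵥ c i)).re = t - 1 := by
      have h2 : (star (c i₀) ⬝ᵥ (Ω *ᵥ c i₀)).re
          + ∑ i ∈ Finset.univ.erase i₀, (star (c i) ⬝ᵥ (Ω *ᵥ c i)).re
          = ∑ i, (star (c i) ⬝ᵥ (Ω *ᵥ c i)).re :=
        Finset.add_sum_erase Finset.univ
          (fun i => (star (c i) ⬝ᵥ (Ω *ᵥ c i)).re) (Finset.mem_univ i₀)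
      linarith [hsum, hterm0, h2]
    have hcard : (Finset.univ.erase i₀).card = d - 1 := by
      rw [Finset.card_erase_of_mem (Finset.mem_univ i₀), Finset.card_univ, Fintype.card_fin]
    -- pigeonhole
    have hex : ∃ j ∈ Finset.univ.erase i₀, c₀ ≤ (star (c j) ⬝ᵥ (Ω *ᵥ c j)).re := by
      by_contra hcon
      push_neg at hcon
      have hne : (Finset.univ.erase i₀).Nonempty := by
        refine ⟨⟨1, hd⟩, Finset.mem_erase.mpr ⟨?_, Finset.mem_univ _⟩⟩
        intro h; exact absurd (congrArg Fin.val h) (by simp [i₀])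
      have hlt : ∑ i ∈ Finset.univ.erase i₀, (star (c i) ⬝ᵥ (Ω *ᵥ c i)).re <
          ∑ _i ∈ Finset.univ.erase i₀, c₀ :=
        Finset.sum_lt_sum_of_nonempty hne (fun j hj => hcon j hj)
      rw [Finset.sum_const, hcard, nsmul_eq_mul, hrest] at hlt
      have hdcast : ((d - 1 : ℕ) : ℝ) = (d:ℝ) - 1 := by
        have : 1 ≤ d := by omega
        push_cast [this]; ring
      rw [hdcast, hc₀, mul_div_cancel₀ _ (ne_of_gt hd1R)] at hlt
      linarith
    obtain ⟨j, hj, hjge⟩ := hex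
    have hjne : i₀ ≠ j := fun h => (Finset.mem_erase.mp hj).1 h.symm
    have hmem : (star (c j) ⬝ᵥ (Ω *ᵥ c j)).re ∈ {x : ℝ | ∃ φ : Fin d → ℂ,
        star φ ⬝ᵥ φ = 1 ∧ star ψ ⬝ᵥ φ = 0 ∧ x = (star φ ⬝ᵥ (Ω *ᵥ φ)).re} := by
      refine ⟨c j, by simpa using hc j j, ?_, rfl⟩
      rw [← hc0]
      simpa [hjne] using hc i₀ j
    exact le_trans hjge (le_csSup hbdd hmem)
  · -- part 5
    intro N hN hdN htN
    rw [hpart4, hc₀, htN, hdN]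
    push_cast
    ring
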